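/- Let Q be a submonoid of H and let P = Mon⟨Q ∪ {t, t⁻¹}⟩ be the submonoid of H* generated by Q together with t and t⁻¹. Then Q = P ∩ H if and only if φ(Q ∩ A) = Q ∩ B. -/

import Mathlib

open HNNExtension HNNExtension.NormalWord

section Aux

variable {H : Type*} [Group H] {A B : Subgroup H} (φ : A ≃* B) (Q : Submonoid H)

private lemma pinch_eq (u : ℤˣ) (g : H) (hg : g ∈ toSubgroup A B u) :
    (t ^ (u : ℤ) * of g * t ^ ((-u : ℤˣ) : ℤ) : HNNExtension H A B φ) =
      of ((toSubgroupEquiv φ u ⟨g, hg⟩ : H)) := by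
  rcases Int.units_eq_one_or u with rfl | rfl
  · simp; exact (equiv_eq_conj (φ := φ) (⟨g, hg⟩ : A)).symm
  · simp; exact (equiv_symm_eq_conj (φ := φ) (⟨g, hg⟩ : B)).symm

/-- The invariant: `x` is the product of a reduced word all of whose letters lie in `Q`. -/
private def QRep (x : HNNExtension H A B φ) : Prop :=
  ∃ w : ReducedWord H A B, w.prod φ = x ∧ w.head ∈ Q ∧ ∀ p ∈ w.toList, p.2 ∈ Q

private lemma chain'_concat_snd {l : List (ℤˣ × H)} {v : ℤˣ} {g : H} (g' : H)
    (h : List.Chain' (fun a b => a.2 ∈ toSubgroup A B a.1 → a.1 = b.1) (l ++ [(v, g)])) :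
    List.Chain' (fun a b => a.2 ∈ toSubgroup A B a.1 → a.1 = b.1) (l ++ [(v, g')]) := by
  unfold List.Chain' at h ⊢; rw [List.isChain_append] at h ⊢
  refine ⟨h.1, List.isChain_singleton _, ?_⟩
  intro x hx y hy
  simp only [List.head?_cons, Option.mem_def, Option.some.injEq] at hy
  subst hy
  exact fun h2 => h.2.2 x hx (v, g) (by simp) h2

private lemma rep_one : QRep φ Q 1 :=
  ⟨ReducedWord.empty H A B, by simp [ReducedWord.prod], Q.one_mem, by simp⟩

private lemma rep_mul_of {x : HNNExtension H A B φ} (hx : QRep φ Q x) {q : H} (hq : q ∈ Q) :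
    QRep φ Q (x * of q) := by
  obtain ⟨w, rfl, hhead, hlist⟩ := hx
  rcases List.eq_nil_or_concat w.toList with h | ⟨l, ⟨v, g⟩, h⟩
  on_goal 2 => rw [List.concat_eq_append] at h
  · refine ⟨⟨w.head * q, [], List.isChain_nil⟩, ?_, Q.mul_mem hhead hq, by simp⟩
    simp [ReducedWord.prod, h, map_mul, mul_assoc]
  · refine ⟨⟨w.head, l ++ [(v, g * q)], chain'_concat_snd (g * q) (h ▸ w.chain)⟩, ?_, hhead, ?_⟩
    · simp only [ReducedWord.prod, h, List.map_append, List.prod_append, List.map_cons,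
        List.map_nil, List.prod_cons, List.prod_nil, map_mul, mul_one, mul_assoc]
    · intro p hp
      rcases List.mem_append.1 hp with hp | hp
      · exact hlist p (h ▸ List.mem_append_left _ hp)
      · simp only [List.mem_singleton] at hp
        subst hp
        exact Q.mul_mem (hlist (v, g) (h ▸ List.mem_append_right _ (by simp))) hq

private lemma rep_mul_t
    (hQ : ∀ (u : ℤˣ) (g : H) (hg : g ∈ toSubgroup A B u), g ∈ Q →
      ((toSubgroupEquiv φ u ⟨g, hg⟩ : H)) ∈ Q)
    {x : HNNExtension H A B φ} (hx : QRep φ Q x) (u : ℤˣ) :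
    QRep φ Q (x * t ^ (u : ℤ)) := by
  obtain ⟨w, hw, hhead, hlist⟩ := hx
  rcases List.eq_nil_or_concat w.toList with h | ⟨l, ⟨v, g⟩, h⟩
  on_goal 2 => rw [List.concat_eq_append] at h
  · refine ⟨⟨w.head, [(u, 1)], List.isChain_singleton _⟩, ?_, hhead, ?_⟩
    · simp [ReducedWord.prod, ← hw, h, mul_assoc]
    · simp only [List.mem_singleton, forall_eq]
      exact Q.one_mem
  · by_cases hp : g ∈ toSubgroup A B v ∧ v = -u
    · -- pinch: remove the last letter and absorb into Q
      obtain ⟨hgv, rfl⟩ := hp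
      have hgQ : g ∈ Q := hlist (-u, g) (h ▸ List.mem_append_right _ (by simp))
      have hrep : QRep φ Q (ReducedWord.prod φ ⟨w.head, l, (List.isChain_append.1 (h ▸ w.chain)).1⟩) :=
        ⟨_, rfl, hhead, fun p hp => hlist p (h ▸ List.mem_append_left _ hp)⟩
      have := rep_mul_of φ Q hrep (hQ (-u) g hgv hgQ)
      convert this using 1
      have hpe := pinch_eq φ (-u) g hgv
      simp only [neg_neg] at hpe
      rw [mul_assoc] at hpe
      simp only [← hw, ReducedWord.prod, h, List.map_append, List.prod_append, List.map_cons,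
        List.map_nil, List.prod_cons, List.prod_nil, mul_one, mul_assoc, hpe]
    · -- no pinch: append `(u, 1)`
      have hchain : List.Chain' (fun a b => a.2 ∈ toSubgroup A B a.1 → a.1 = b.1)
          ((l ++ [(v, g)]) ++ [(u, 1)]) := by
        unfold List.Chain'; rw [List.isChain_append]
        refine ⟨h ▸ w.chain, List.isChain_singleton _, ?_⟩
        intro a ha b hb
        rw [List.getLast?_concat] at ha
        simp only [Option.mem_def, Option.some.injEq] at ha
        simp only [List.head?_cons, Option.mem_def, Option.some.injEq] at hb
        subst ha; subst hb
        intro hgv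
        rcases Int.units_eq_one_or u with rfl | rfl <;>
          rcases Int.units_eq_one_or v with rfl | rfl <;>
            simp_all
      refine ⟨⟨w.head, (l ++ [(v, g)]) ++ [(u, 1)], hchain⟩, ?_, hhead, ?_⟩
      · simp only [ReducedWord.prod, ← hw, h, List.map_append, List.prod_append, List.map_cons,
          List.map_nil, List.prod_cons, List.prod_nil, map_one, mul_one, mul_assoc]
      · intro p hp
        rcases List.mem_append.1 hp with hp | hp
        · exact hlist p (h ▸ hp)
        · simp only [List.mem_singleton] at hp
          subst hp
          exact Q.one_mem

private lemma qrep_of_mem_closure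
    (hQ : ∀ (u : ℤˣ) (g : H) (hg : g ∈ toSubgroup A B u), g ∈ Q →
      ((toSubgroupEquiv φ u ⟨g, hg⟩ : H)) ∈ Q)
    {x : HNNExtension H A B φ}
    (hx : x ∈ Submonoid.closure ((of '' (Q : Set H)) ∪
      {(t : HNNExtension H A B φ), t⁻¹})) :
    QRep φ Q x := by
  induction hx using Submonoid.closure_induction_right with
  | one => exact rep_one φ Q
  | mul_right x hx y hy ih =>
    rcases hy with ⟨q, hq, rfl⟩ | hy
    · exact rep_mul_of φ Q ih hq
    · rcases hy with rfl | rfl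
      · simpa using rep_mul_t φ Q hQ ih 1
      · have := rep_mul_t φ Q hQ ih (-1)
        simpa using this

end Aux

/-- Lemma 4.1 (`lem:QisPcapH`): Let `H*` be an HNN extension of a free group `H`
with associated subgroups `A`, `B` and associated isomorphism `φ : A → B`, let
`Q` be a submonoid of `H`, and let `P = Mon⟨Q ∪ {t, t⁻¹}⟩ ≤ H*`.  Then
`Q = P ∩ H` if and only if `φ(Q ∩ A) = Q ∩ B`. -/
theorem statement_17 (H : Type*) [Group H] [IsFreeGroup H]
    (A B : Subgroup H) (φ : A ≃* B) (Q : Submonoid H) :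
    (HNNExtension.of '' (Q : Set H) =
        ↑(Submonoid.closure
            ((HNNExtension.of '' (Q : Set H)) ∪
              {(HNNExtension.t : HNNExtension H A B φ), HNNExtension.t⁻¹})) ∩
          Set.range (HNNExtension.of : H →* HNNExtension H A B φ)) ↔
      {x : H | ∃ a : A, (a : H) ∈ Q ∧ ((φ a : B) : H) = x} = (Q : Set H) ∩ (B : Set H) := by
  have htmem : (t : HNNExtension H A B φ) ∈
      Submonoid.closure ((of '' (Q : Set H)) ∪ {(t : HNNExtension H A B φ), t⁻¹}) :=
    Submonoid.subset_closure (Set.mem_union_right _ (by simp))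
  have htinvmem : (t⁻¹ : HNNExtension H A B φ) ∈
      Submonoid.closure ((of '' (Q : Set H)) ∪ {(t : HNNExtension H A B φ), t⁻¹}) :=
    Submonoid.subset_closure (Set.mem_union_right _ (by simp))
  have hofmem : ∀ q ∈ Q, (of q : HNNExtension H A B φ) ∈
      Submonoid.closure ((of '' (Q : Set H)) ∪ {(t : HNNExtension H A B φ), t⁻¹}) :=
    fun q hq => Submonoid.subset_closure (Set.mem_union_left _ ⟨q, hq, rfl⟩)
  constructor
  · intro hQP
    ext x
    constructor
    · rintro ⟨a, haQ, rfl⟩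
      refine ⟨?_, (φ a).2⟩
      have hcl : (of ((φ a : B) : H) : HNNExtension H A B φ) ∈
          Submonoid.closure ((of '' (Q : Set H)) ∪ {(t : HNNExtension H A B φ), t⁻¹}) := by
        rw [equiv_eq_conj]
        exact mul_mem (mul_mem htmem (hofmem _ haQ)) htinvmem
      have : (of ((φ a : B) : H) : HNNExtension H A B φ) ∈ of '' (Q : Set H) := by
        rw [hQP]; exact ⟨hcl, ⟨_, rfl⟩⟩
      obtain ⟨q, hq, hq'⟩ := this
      rwa [← of_injective φ hq']
    · rintro ⟨hxQ, hxB⟩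
      refine ⟨φ.symm ⟨x, hxB⟩, ?_, by simp⟩
      have hcl : (of ((φ.symm ⟨x, hxB⟩ : A) : H) : HNNExtension H A B φ) ∈
          Submonoid.closure ((of '' (Q : Set H)) ∪ {(t : HNNExtension H A B φ), t⁻¹}) := by
        rw [equiv_symm_eq_conj]
        exact mul_mem (mul_mem htinvmem (hofmem _ hxQ)) htmem
      have : (of ((φ.symm ⟨x, hxB⟩ : A) : H) : HNNExtension H A B φ) ∈ of '' (Q : Set H) := by
        rw [hQP]; exact ⟨hcl, ⟨_, rfl⟩⟩
      obtain ⟨q, hq, hq'⟩ := this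
      rwa [← of_injective φ hq']
  · intro hφ
    have hA : ∀ a : A, (a : H) ∈ Q → ((φ a : B) : H) ∈ Q := by
      intro a ha
      have : ((φ a : B) : H) ∈ {x : H | ∃ a : A, (a : H) ∈ Q ∧ ((φ a : B) : H) = x} :=
        ⟨a, ha, rfl⟩
      rw [hφ] at this
      exact this.1
    have hB : ∀ b : B, (b : H) ∈ Q → ((φ.symm b : A) : H) ∈ Q := by
      intro b hb
      have : (b : H) ∈ {x : H | ∃ a : A, (a : H) ∈ Q ∧ ((φ a : B) : H) = x} := by
        rw [hφ]; exact ⟨hb, b.2⟩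
      obtain ⟨a, haQ, hab⟩ := this
      have : φ a = b := Subtype.ext hab
      rwa [← this, MulEquiv.symm_apply_apply]
    have hQ : ∀ (u : ℤˣ) (g : H) (hg : g ∈ toSubgroup A B u), g ∈ Q →
        ((toSubgroupEquiv φ u ⟨g, hg⟩ : H)) ∈ Q := by
      intro u g hg hgQ
      rcases Int.units_eq_one_or u with rfl | rfl
      · exact hA ⟨g, hg⟩ hgQ
      · exact hB ⟨g, hg⟩ hgQ
    apply Set.Subset.antisymm
    · rintro x ⟨q, hq, rfl⟩
      exact ⟨hofmem q hq, ⟨q, rfl⟩⟩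
    · rintro x ⟨hxP, g, rfl⟩
      obtain ⟨w, hw, hhead, -⟩ := qrep_of_mem_closure φ Q hQ hxP
      have hnil : w.toList = [] :=
        HNNExtension.ReducedWord.toList_eq_nil_of_mem_of_range φ w (by rw [hw]; exact ⟨g, rfl⟩)
      have : w.prod φ = of w.head := by
        simp [ReducedWord.prod, hnil]
      rw [this] at hw
      exact ⟨w.head, hhead, hw⟩
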